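/- For u, v ∈ {0,1}^n with d_H(u,v) = ε + 1 and ε/n < 1/2, the normalized intersection of the two ε-balls satisfies I^ε_{ε+1} ≥ 2^{-n}(2^ε - 1). -/

import Mathlib

/-- Normalized volume of the intersection of two Hamming `ε`-balls in `{0,1}^n`
whose centers are at Hamming distance `d`. -/
noncomputable def Iball (n ε d : ℕ) : ℝ :=
  (∑ k ∈ Finset.Icc (d - ε) (min ε d),
      (d.choose k : ℝ) *
        ∑ i ∈ Finset.range (min (ε - k) (ε + k - d) + 1), ((n - d).choose i : ℝ)) / 2 ^ n

theorem intersection_lower_bound_eps_plus_one (n ε : ℕ) (u v : Fin n → Bool)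
    (hd : hammingDist u v = ε + 1) (hhalf : (ε : ℝ) / n < 1/2) :
    ((2 : ℝ) ^ ε - 1) / 2 ^ n ≤ Iball n ε (ε + 1) := by
  rw [Iball]
  gcongr ?_ / _
  have h1 : ε + 1 - ε = 1 := by omega
  have h2 : min ε (ε + 1) = ε := by omega
  rw [h1, h2]
  have key : ∑ k ∈ Finset.Icc 1 ε, (ε.choose k : ℝ) = 2 ^ ε - 1 := by
    have := Nat.sum_range_choose ε
    have h3 : ∑ k ∈ Finset.range (ε + 1), (ε.choose k : ℝ) = 2 ^ ε := by
      exact_mod_cast congrArg (Nat.cast : ℕ → ℝ) this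
    have h4 : Finset.range (ε + 1) = insert 0 (Finset.Icc 1 ε) := by
      ext x; simp [Finset.mem_range, Finset.mem_Icc]; omega
    rw [h4, Finset.sum_insert (by simp)] at h3
    simp at h3
    linarith
  calc (2:ℝ) ^ ε - 1 = ∑ k ∈ Finset.Icc 1 ε, (ε.choose k : ℝ) := key.symm
    _ ≤ ∑ k ∈ Finset.Icc 1 ε, ((ε+1).choose k : ℝ) *
        ∑ i ∈ Finset.range (min (ε - k) (ε + k - (ε+1)) + 1), ((n - (ε+1)).choose i : ℝ) := by
        apply Finset.sum_le_sum
        intro k hk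
        have hc : (ε.choose k : ℝ) ≤ ((ε+1).choose k : ℝ) := by
          exact_mod_cast Nat.choose_le_choose k (Nat.le_succ ε)
        have hs : (1:ℝ) ≤ ∑ i ∈ Finset.range (min (ε - k) (ε + k - (ε+1)) + 1),
            ((n - (ε+1)).choose i : ℝ) := by
          have h0 : (0:ℕ) ∈ Finset.range (min (ε - k) (ε + k - (ε+1)) + 1) := by
            simp
          calc (1:ℝ) = ((n - (ε+1)).choose 0 : ℝ) := by simp
            _ ≤ _ := Finset.single_le_sum (f := fun i => ((n - (ε+1)).choose i : ℝ)) (fun i _ => by positivity) h0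
        calc (ε.choose k : ℝ) = (ε.choose k : ℝ) * 1 := by ring
          _ ≤ _ := by
            apply mul_le_mul hc hs (by norm_num) (by positivity)
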